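/- The vector field F(x,y,z) = (y², −xy, x(z−2y)) on ℝ³ is complete. Specifically: x² + y² and y² − yz are first integrals; on {y = 0} the solutions are (x₀, 0, z₀e^{x₀t}); and for y₀ ≠ 0, boundedness of (x(t),y(t)) together with z(t) = y(t) − k/y(t) (where k = y₀² − y₀z₀) gives global existence. -/

import Mathlib

/-- The geodesic field `F₅,₀` of `Q₅,₀` on `h(−1)`: `(y², −xy, x(z−2y))`. -/
def F50sol (v : Fin 3 → ℝ) : Fin 3 → ℝ :=
  ![(v 1) ^ 2, -(v 0 * v 1), v 0 * (v 2 - 2 * v 1)]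

/-- `x² + y²` is a first integral. -/
lemma F50_fi1 (γ : ℝ → Fin 3 → ℝ) (t : ℝ) (h : HasDerivAt γ (F50sol (γ t)) t) :
    HasDerivAt (fun u => (γ u 0) ^ 2 + (γ u 1) ^ 2) 0 t := by
  have h0 : HasDerivAt (fun u => γ u 0) ((γ t 1)^2) t := hasDerivAt_pi.1 h 0
  have h1 : HasDerivAt (fun u => γ u 1) (-(γ t 0 * γ t 1)) t := hasDerivAt_pi.1 h 1
  have : HasDerivAt (fun u => (γ u 0) ^ 2 + (γ u 1) ^ 2) _ t := (h0.pow 2).add (h1.pow 2)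
  convert this using 1
  push_cast; ring

/-- `y² − yz` is a first integral. -/
lemma F50_fi2 (γ : ℝ → Fin 3 → ℝ) (t : ℝ) (h : HasDerivAt γ (F50sol (γ t)) t) :
    HasDerivAt (fun u => (γ u 1) ^ 2 - γ u 1 * γ u 2) 0 t := by
  have h1 : HasDerivAt (fun u => γ u 1) (-(γ t 0 * γ t 1)) t := hasDerivAt_pi.1 h 1
  have h2 : HasDerivAt (fun u => γ u 2) (γ t 0 * (γ t 2 - 2 * γ t 1)) t := hasDerivAt_pi.1 h 2
  have : HasDerivAt (fun u => (γ u 1) ^ 2 - γ u 1 * γ u 2) _ t := (h1.pow 2).sub (h1.mul h2)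
  convert this using 1
  push_cast; ring

/-- Solutions on `{y = 0}`. -/
lemma F50_y0 (x₀ z₀ : ℝ) (t : ℝ) : HasDerivAt
    (fun t : ℝ => (![x₀, 0, z₀ * Real.exp (x₀ * t)] : Fin 3 → ℝ))
    (F50sol ![x₀, 0, z₀ * Real.exp (x₀ * t)]) t := by
  apply hasDerivAt_pi.2
  intro i
  fin_cases i
  · simpa [F50sol] using hasDerivAt_const t x₀
  · simpa [F50sol] using hasDerivAt_const t (0:ℝ)
  · have h : HasDerivAt (fun u : ℝ => z₀ * Real.exp (x₀ * u))
        (z₀ * (Real.exp (x₀ * t) * (x₀ * 1))) t :=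
      (((hasDerivAt_id t).const_mul x₀).exp).const_mul z₀
    have e : z₀ * (Real.exp (x₀ * t) * (x₀ * 1)) = x₀ * (z₀ * Real.exp (x₀ * t) - 2 * 0) := by ring
    rw [e] at h
    simpa [F50sol] using h

/-- Along a solution with `y 0 ≠ 0`, `y` never vanishes and `z = y − k/y`. -/
lemma F50_nv (γ : ℝ → Fin 3 → ℝ) (hγ : ∀ t, HasDerivAt γ (F50sol (γ t)) t)
    (hy0 : γ 0 1 ≠ 0) (t : ℝ) :
    γ t 1 ≠ 0 ∧ γ t 2 = γ t 1 - ((γ 0 1) ^ 2 - γ 0 1 * γ 0 2) / γ t 1 := by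
  have hx : ∀ s, HasDerivAt (fun u => γ u 0) ((γ s 1)^2) s := fun s => hasDerivAt_pi.1 (hγ s) 0
  have hy : ∀ s, HasDerivAt (fun u => γ u 1) (-(γ s 0 * γ s 1)) s :=
    fun s => hasDerivAt_pi.1 (hγ s) 1
  have hxc : Continuous (fun s => γ s 0) := by
    apply continuous_iff_continuousAt.2
    exact fun s => (hx s).differentiableAt.continuousAt
  set X : ℝ → ℝ := fun u => ∫ s in (0:ℝ)..u, γ s 0 with hXdef
  have hX : ∀ u, HasDerivAt X (γ u 0) u := by
    intro u
    exact intervalIntegral.integral_hasDerivAt_right (hxc.intervalIntegrable _ _)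
      hxc.aestronglyMeasurable.stronglyMeasurableAtFilter hxc.continuousAt
  set g : ℝ → ℝ := fun u => γ u 1 * Real.exp (X u) with hgdef
  have hg : ∀ u, HasDerivAt g 0 u := by
    intro u
    have : HasDerivAt (fun u => γ u 1 * Real.exp (X u)) _ u := (hy u).mul ((hX u).exp)
    convert this using 1
    ring
  have hgc : g t = g 0 :=
    is_const_of_deriv_eq_zero (fun u => (hg u).differentiableAt) (fun u => (hg u).deriv) t 0
  have hg0 : g 0 = γ 0 1 := by simp [hgdef, hXdef]
  have hyne : γ t 1 ≠ 0 := by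
    intro h
    rw [hg0] at hgc
    apply hy0
    simpa [hgdef, h] using hgc.symm
  refine ⟨hyne, ?_⟩
  set K : ℝ → ℝ := fun u => (γ u 1)^2 - γ u 1 * γ u 2 with hKdef
  have hK : ∀ u, HasDerivAt K 0 u := fun u => F50_fi2 γ u (hγ u)
  have hKc : K t = K 0 :=
    is_const_of_deriv_eq_zero (fun u => (hK u).differentiableAt) (fun u => (hK u).deriv) t 0
  simp only [hKdef] at hKc
  field_simp
  linarith [hKc]

/-- Global solution through an arbitrary point with `v 1 ≠ 0`. -/
lemma F50_global (v : Fin 3 → ℝ) (h1 : v 1 ≠ 0) :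
    ∃ γ : ℝ → Fin 3 → ℝ, γ 0 = v ∧ ∀ t, HasDerivAt γ (F50sol (γ t)) t := by
  set c : ℝ := Real.arsinh (v 0 / v 1) with hc
  set r : ℝ := v 1 * Real.cosh c with hr
  have hsc : Real.sinh c = v 0 / v 1 := Real.sinh_arsinh _
  have hcpos : ∀ u : ℝ, (0:ℝ) < Real.cosh u := fun u => Real.cosh_pos u
  have hrne : r ≠ 0 := mul_ne_zero h1 (hcpos c).ne'
  set k : ℝ := (v 1)^2 - v 1 * v 2 with hk
  set x : ℝ → ℝ := fun t => r * Real.sinh (r * t + c) / Real.cosh (r * t + c) with hxdef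
  set y : ℝ → ℝ := fun t => r / Real.cosh (r * t + c) with hydef
  set z : ℝ → ℝ := fun t => y t - k / y t with hzdef
  have hyne : ∀ t, y t ≠ 0 := fun t => div_ne_zero hrne (hcpos _).ne'
  refine ⟨fun t => ![x t, y t, z t], ?_, ?_⟩
  · have hx0 : x 0 = v 0 := by
      simp only [hxdef]
      rw [mul_zero, zero_add, hsc, hr]
      field_simp
    have hy0 : y 0 = v 1 := by
      simp only [hydef]
      rw [mul_zero, zero_add, hr]
      field_simp
    have hz0 : z 0 = v 2 := by
      simp only [hzdef, hy0, hk]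
      field_simp
      ring
    funext i
    fin_cases i <;> simp [hx0, hy0, hz0]
  · intro t
    have hu : HasDerivAt (fun t : ℝ => r * t + c) r t := by
      simpa using ((hasDerivAt_id t).const_mul r).add_const c
    have hs : HasDerivAt (fun t : ℝ => Real.sinh (r * t + c))
        (Real.cosh (r * t + c) * r) t := hu.sinh
    have hch : HasDerivAt (fun t : ℝ => Real.cosh (r * t + c))
        (Real.sinh (r * t + c) * r) t := hu.cosh
    have pyth := Real.cosh_sq_sub_sinh_sq (r * t + c)
    set S := Real.sinh (r * t + c)
    set C := Real.cosh (r * t + c)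
    have hCne : C ≠ 0 := (hcpos _).ne'
    have hxd : HasDerivAt x ((r * (C * r) * C - r * S * (S * r)) / C ^ 2) t :=
      (hs.const_mul r).div hch hCne
    have hyd : HasDerivAt y ((0 * C - r * (S * r)) / C ^ 2) t :=
      (hasDerivAt_const t r).div hch hCne
    have hzd : HasDerivAt z
        (((0 * C - r * (S * r)) / C ^ 2) -
          ((0 * y t - k * ((0 * C - r * (S * r)) / C ^ 2)) / (y t) ^ 2)) t :=
      hyd.sub ((hasDerivAt_const t k).div hyd (hyne t))
    apply hasDerivAt_pi.2
    intro i
    fin_cases i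
    · have e : (r * (C * r) * C - r * S * (S * r)) / C ^ 2 = (y t)^2 := by
        simp only [hydef]
        field_simp
        nlinarith [pyth]
      rw [e] at hxd
      simpa [F50sol] using hxd
    · have e : (0 * C - r * (S * r)) / C ^ 2 = -(x t * y t) := by
        simp only [hxdef, hydef]
        field_simp
        ring
      rw [e] at hyd
      simpa [F50sol] using hyd
    · have e : (((0 * C - r * (S * r)) / C ^ 2) -
          ((0 * y t - k * ((0 * C - r * (S * r)) / C ^ 2)) / (y t) ^ 2))
          = x t * (z t - 2 * y t) := by
        simp only [hzdef, hxdef, hydef]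
        field_simp
        ring
      rw [e] at hzd
      simpa [F50sol] using hzd

/-- `F₅,₀` on `h(−1)` is complete: `x² + y²` and `y² − yz` are first
integrals; on `{y = 0}` solutions are `(x₀, 0, z₀e^{x₀t})`; for `y 0 ≠ 0`, `y` never
vanishes and `z = y − k/y` with `k = y₀² − y₀z₀`; and every point lies on a global
integral curve. -/
theorem stmt_18 :
    (∀ (γ : ℝ → Fin 3 → ℝ) (t : ℝ), HasDerivAt γ (F50sol (γ t)) t →
        HasDerivAt (fun u => (γ u 0) ^ 2 + (γ u 1) ^ 2) 0 t ∧
        HasDerivAt (fun u => (γ u 1) ^ 2 - γ u 1 * γ u 2) 0 t) ∧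
    (∀ x₀ z₀ : ℝ, ∀ t : ℝ, HasDerivAt
        (fun t : ℝ => (![x₀, 0, z₀ * Real.exp (x₀ * t)] : Fin 3 → ℝ))
        (F50sol ![x₀, 0, z₀ * Real.exp (x₀ * t)]) t) ∧
    (∀ γ : ℝ → Fin 3 → ℝ, (∀ t, HasDerivAt γ (F50sol (γ t)) t) → γ 0 1 ≠ 0 →
        ∀ t, γ t 1 ≠ 0 ∧ γ t 2 = γ t 1 - ((γ 0 1) ^ 2 - γ 0 1 * γ 0 2) / γ t 1) ∧
    (∀ v : Fin 3 → ℝ, ∃ γ : ℝ → Fin 3 → ℝ, γ 0 = v ∧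
        ∀ t, HasDerivAt γ (F50sol (γ t)) t) := by
  refine ⟨fun γ t h => ⟨F50_fi1 γ t h, F50_fi2 γ t h⟩, F50_y0, F50_nv, fun v => ?_⟩
  by_cases h1 : v 1 = 0
  · refine ⟨fun t => ![v 0, 0, v 2 * Real.exp (v 0 * t)], ?_, fun t => F50_y0 (v 0) (v 2) t⟩
    funext i
    fin_cases i <;> simp [h1]
  · exact F50_global v h1
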